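/- Let g : ℝ → ℝ satisfy g(t) > 0 for all t ≥ 0, let T > 0, ε ∈ (0,1), δ > 0, and let A ⊆ [0, ∞) be Lebesgue-measurable with liminf_{S→∞} volume(A ∩ [0,S])/S ≥ δ. Assume: (i) g(t) ≤ exp(t - s)·g(s) for all 0 ≤ s ≤ t; and (ii) g(t + T) ≤ (1 - ε)·exp(T)·g(t) for all t ∈ A. Then limsup_{t→∞} (log g(t))/t < 1. -/

import Mathlib

open MeasureTheory Filter Real


lemma aux_fin (A : Set ℝ) (t : ℝ) : volume (A ∩ Set.Icc 0 t) ≠ ⊤ :=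
  ((measure_mono Set.inter_subset_right).trans_lt (by simp [Real.volume_Icc])).ne

lemma aux_mono (A : Set ℝ) {s t : ℝ} (h : s ≤ t) :
    (volume (A ∩ Set.Icc 0 s)).toReal ≤ (volume (A ∩ Set.Icc 0 t)).toReal :=
  ENNReal.toReal_mono (aux_fin A t)
    (measure_mono (Set.inter_subset_inter_right _ (Set.Icc_subset_Icc_right h)))

lemma aux_zero (A : Set ℝ) : (volume (A ∩ Set.Icc 0 (0:ℝ))).toReal = 0 := by
  have : volume (A ∩ Set.Icc 0 (0:ℝ)) ≤ volume (Set.Icc (0:ℝ) 0) := measure_mono Set.inter_subset_right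
  simp [Real.volume_Icc] at this
  simp [this]

lemma aux_le (A : Set ℝ) (t : ℝ) (ht : 0 ≤ t) : (volume (A ∩ Set.Icc 0 t)).toReal ≤ t := by
  have : volume (A ∩ Set.Icc 0 t) ≤ volume (Set.Icc (0:ℝ) t) := measure_mono Set.inter_subset_right
  have h2 := ENNReal.toReal_mono ((by simp [Real.volume_Icc] : volume (Set.Icc (0:ℝ) t) < ⊤).ne) this
  rw [Real.volume_Icc, ENNReal.toReal_ofReal (by linarith : (0:ℝ) ≤ t - 0)] at h2
  linarith

lemma aux_lip (A : Set ℝ) {s t : ℝ} (h : s ≤ t) :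
    (volume (A ∩ Set.Icc 0 t)).toReal ≤ (volume (A ∩ Set.Icc 0 s)).toReal + (t - s) := by
  have hsub : A ∩ Set.Icc 0 t ⊆ (A ∩ Set.Icc 0 s) ∪ Set.Ioc s t := by
    rintro x ⟨hxA, hx0, hxt⟩
    rcases le_or_gt x s with h1 | h1
    · exact Or.inl ⟨hxA, hx0, h1⟩
    · exact Or.inr ⟨h1, hxt⟩
  have h1 : volume (A ∩ Set.Icc 0 t) ≤ volume (A ∩ Set.Icc 0 s) + volume (Set.Ioc s t) :=
    (measure_mono hsub).trans (measure_union_le _ _)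
  have h2 := ENNReal.toReal_mono ?_ h1
  · rw [ENNReal.toReal_add (aux_fin A s) (by simp [Real.volume_Ioc])] at h2
    simpa [Real.volume_Ioc, ENNReal.toReal_ofReal (by linarith : (0:ℝ) ≤ t - s)] using h2
  · exact ENNReal.add_ne_top.mpr ⟨aux_fin A s, by simp [Real.volume_Ioc]⟩

lemma aux_cont (A : Set ℝ) : Continuous (fun t => (volume (A ∩ Set.Icc 0 t)).toReal) := by
  have : LipschitzWith 1 (fun t => (volume (A ∩ Set.Icc 0 t)).toReal) := by
    apply LipschitzWith.of_dist_le_mul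
    intro x y
    rw [Real.dist_eq, Real.dist_eq, NNReal.coe_one, one_mul]
    rcases le_total x y with h | h
    · have := aux_lip A h
      have := aux_mono A h
      rw [abs_of_nonpos (by linarith), abs_of_nonpos (by linarith)]
      have := aux_lip A h
      linarith
    · have := aux_lip A h
      have := aux_mono A h
      rw [abs_of_nonneg (by linarith), abs_of_nonneg (by linarith)]
      linarith
  exact this.continuous

lemma aux_add (A : Set ℝ) (hmeas : MeasurableSet A) {s r : ℝ} (h0 : 0 ≤ s) (h : s ≤ r) :
    (volume (A ∩ Set.Icc 0 r)).toReal
      = (volume (A ∩ Set.Icc 0 s)).toReal + (volume (A ∩ Set.Ioc s r)).toReal := by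
  have hun : A ∩ Set.Icc 0 r = (A ∩ Set.Icc 0 s) ∪ (A ∩ Set.Ioc s r) := by
    rw [← Set.inter_union_distrib_left, Set.Icc_union_Ioc_eq_Icc h0 h]
  have hdisj : Disjoint (A ∩ Set.Icc 0 s) (A ∩ Set.Ioc s r) := by
    apply Set.disjoint_left.mpr
    rintro x ⟨-, -, hxs⟩ ⟨-, hxs', -⟩
    exact absurd hxs (not_le.mpr hxs')
  rw [hun, measure_union hdisj (hmeas.inter measurableSet_Ioc),
    ENNReal.toReal_add (aux_fin A s) ?_]
  · exact ((measure_mono (Set.inter_subset_right)).trans_lt (by simp [Real.volume_Ioc])).ne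


lemma aux_key (g : ℝ → ℝ)
    (T : ℝ) (hT : 0 < T) (ε : ℝ) (hε : ε ∈ Set.Ioo (0:ℝ) 1)
    (A : Set ℝ) (hmeas : MeasurableSet A)
    (hcocycle : ∀ s t : ℝ, 0 ≤ s → s ≤ t → g t ≤ Real.exp (t - s) * g s)
    (hcontract : ∀ t ∈ A, g (t + T) ≤ (1 - ε) * Real.exp T * g t)
    (aux_mono : ∀ {s t : ℝ}, s ≤ t → (volume (A ∩ Set.Icc 0 s)).toReal ≤ (volume (A ∩ Set.Icc 0 t)).toReal)
    (aux_zero : (volume (A ∩ Set.Icc 0 (0:ℝ))).toReal = 0)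
    (aux_le : ∀ t : ℝ, 0 ≤ t → (volume (A ∩ Set.Icc 0 t)).toReal ≤ t)
    (aux_lip : ∀ {s t : ℝ}, s ≤ t → (volume (A ∩ Set.Icc 0 t)).toReal ≤ (volume (A ∩ Set.Icc 0 s)).toReal + (t - s))
    (aux_cont : Continuous (fun t => (volume (A ∩ Set.Icc 0 t)).toReal))
    (aux_add : ∀ {s r : ℝ}, 0 ≤ s → s ≤ r → (volume (A ∩ Set.Icc 0 r)).toReal
      = (volume (A ∩ Set.Icc 0 s)).toReal + (volume (A ∩ Set.Ioc s r)).toReal) :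
    ∀ k : ℕ, ∀ S : ℝ, 2*(k+1)*T ≤ (volume (A ∩ Set.Icc 0 S)).toReal →
      g S ≤ Real.exp S * (1-ε)^k * g 0 := by
  set F : ℝ → ℝ := fun t => (volume (A ∩ Set.Icc 0 t)).toReal with hF
  have hF0 : F 0 = 0 := aux_zero
  have hS0' : ∀ (c S : ℝ), 0 < c → c ≤ F S → 0 ≤ S := by
    intro c S hc hcS
    by_contra h
    push_neg at h
    have : F S ≤ F 0 := aux_mono h.le
    rw [hF0] at this
    linarith
  intro k
  induction k with
  | zero =>
    intro S hS
    have hS0 : (0:ℝ) ≤ S := hS0' _ S (by nlinarith) hS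
    have := hcocycle 0 S le_rfl hS0
    simpa using this
  | succ k ih =>
    intro S hS
    push_cast at hS
    have hS0 : (0:ℝ) ≤ S := hS0' _ S (by nlinarith) hS
    -- IVT to find s with F s = 2*(k+1)*T
    have hmem : (2*((k:ℝ)+1)*T) ∈ Set.Icc (F 0) (F S) := by
      constructor
      · rw [hF0]; positivity
      · nlinarith
    obtain ⟨s, hsmem, hFs⟩ := intermediate_value_Icc hS0 aux_cont.continuousOn hmem
    have hs0 : 0 ≤ s := hsmem.1
    have hSTS : F S ≤ F (S - T) + T := by have := aux_lip (show S - T ≤ S by linarith); linarith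
    have hlt : s < S - T := by
      by_contra h
      push_neg at h
      have : F (S - T) ≤ F s := aux_mono h
      nlinarith
    have hpos2 : 0 < (volume (A ∩ Set.Ioc s (S - T))).toReal := by
      have := aux_add hs0 hlt.le
      nlinarith
    have hne : (A ∩ Set.Ioc s (S - T)).Nonempty := by
      by_contra h
      rw [Set.not_nonempty_iff_eq_empty] at h
      rw [h] at hpos2
      simp at hpos2
    obtain ⟨t, htA, hts, htS⟩ := hne
    have ht0 : 0 ≤ t := le_trans hs0 hts.le
    have h1 : g S ≤ Real.exp (S - (t+T)) * g (t+T) := hcocycle (t+T) S (by linarith) (by linarith)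
    have h2 : g (t+T) ≤ (1-ε)*Real.exp T * g t := hcontract t htA
    have h3 : g t ≤ Real.exp t * (1-ε)^k * g 0 := by
      apply ih
      calc 2*((k:ℝ)+1)*T = F s := hFs.symm
        _ ≤ F t := aux_mono hts.le
    have hg0 : 0 ≤ g 0 ∨ True := Or.inr trivial
    have hεpos : (0:ℝ) < 1 - ε := by linarith [hε.2]
    calc g S ≤ Real.exp (S - (t+T)) * g (t+T) := h1
      _ ≤ Real.exp (S - (t+T)) * ((1-ε)*Real.exp T * g t) := by
          exact mul_le_mul_of_nonneg_left h2 (Real.exp_nonneg _)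
      _ ≤ Real.exp (S - (t+T)) * ((1-ε)*Real.exp T * (Real.exp t * (1-ε)^k * g 0)) := by
          apply mul_le_mul_of_nonneg_left _ (Real.exp_nonneg _)
          apply mul_le_mul_of_nonneg_left h3
          positivity
      _ = Real.exp S * (1-ε)^(k+1) * g 0 := by
          rw [show S = (S - (t+T)) + T + t by ring, Real.exp_add, Real.exp_add]
          ring

theorem stmt_7 (g : ℝ → ℝ) (hpos : ∀ t : ℝ, 0 ≤ t → 0 < g t)
    (T : ℝ) (hT : 0 < T) (ε : ℝ) (hε : ε ∈ Set.Ioo (0 : ℝ) 1) (δ : ℝ) (hδ : 0 < δ)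
    (A : Set ℝ) (hA : A ⊆ Set.Ici (0 : ℝ)) (hmeas : MeasurableSet A)
    (hfreq : δ ≤ liminf (fun S : ℝ => (volume (A ∩ Set.Icc 0 S)).toReal / S) atTop)
    (hcocycle : ∀ s t : ℝ, 0 ≤ s → s ≤ t → g t ≤ Real.exp (t - s) * g s)
    (hcontract : ∀ t ∈ A, g (t + T) ≤ (1 - ε) * Real.exp T * g t) :
    limsup (fun t : ℝ => Real.log (g t) / t) atTop < 1 := by
  have keylem : ∀ k : ℕ, ∀ S : ℝ, 2*(k+1)*T ≤ (volume (A ∩ Set.Icc 0 S)).toReal →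
      g S ≤ Real.exp S * (1-ε)^k * g 0 :=
    aux_key g T hT ε hε A hmeas hcocycle hcontract (aux_mono A) (aux_zero A)
      (fun t ht => aux_le A t ht) (aux_lip A) (aux_cont A) (aux_add A hmeas)
  set F : ℝ → ℝ := fun t => (volume (A ∩ Set.Icc 0 t)).toReal with hFdef
  have hε1 : (0:ℝ) < 1 - ε := by linarith [hε.2]
  have hL : Real.log (1 - ε) < 0 := Real.log_neg hε1 (by linarith [hε.1])
  set L : ℝ := Real.log (1 - ε) with hLdef
  set c : ℝ := 1 + (δ/(16*T)) * L with hcdef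
  have hc1 : c < 1 := by
    have : (δ/(16*T)) * L < 0 := mul_neg_of_pos_of_neg (by positivity) hL
    rw [hcdef]; linarith
  set d : ℝ := -(δ/(16*T)) * L with hddef
  have hd : 0 < d := by
    rw [hddef]
    nlinarith [div_pos hδ (by linarith : (0:ℝ) < 16*T)]
  set C : ℝ := Real.log (g 0) - L with hCdef
  -- eventual bound
  have hbdd : IsBoundedUnder (· ≥ ·) atTop (fun S : ℝ => F S / S) := by
    refine ⟨0, ?_⟩
    rw [eventually_map]
    filter_upwards [eventually_gt_atTop (0:ℝ)] with S hS
    exact div_nonneg ENNReal.toReal_nonneg hS.le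
  have hE1 : ∀ᶠ S : ℝ in atTop, δ/2 < F S / S :=
    eventually_lt_of_lt_liminf (lt_of_lt_of_le (by linarith) hfreq) hbdd
  have hev : ∀ᶠ S : ℝ in atTop, Real.log (g S) / S ≤ c := by
    filter_upwards [hE1, eventually_ge_atTop (1:ℝ),
      eventually_ge_atTop (8*T/δ), eventually_ge_atTop (C/d)] with S hS1 hS2 hS3 hS4
    have hS0 : (0:ℝ) < S := by linarith
    have hFS : δ/2 * S ≤ F S := by
      rw [lt_div_iff₀ hS0] at hS1
      linarith
    set x : ℝ := δ*S/(8*T) with hxdef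
    have hx1 : 1 ≤ x := by
      rw [hxdef, le_div_iff₀ (by positivity)]
      rw [div_le_iff₀ hδ] at hS3
      linarith
    set k : ℕ := ⌊x⌋₊ with hkdef
    have hkx : (k:ℝ) ≤ x := Nat.floor_le (by linarith)
    have hxk : x - 1 ≤ (k:ℝ) := by
      have := Nat.lt_floor_add_one x
      linarith
    have hkey : 2*((k:ℝ)+1)*T ≤ F S := by
      have h1 : (k:ℝ) + 1 ≤ 2*x := by linarith
      have h2 : 2*((k:ℝ)+1)*T ≤ 4*x*T := by nlinarith
      have h3 : 4*x*T = δ*S/2 := by rw [hxdef]; field_simp; ring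
      linarith
    have hg := keylem k S hkey
    have hgS : 0 < g S := hpos S hS0.le
    have hg0 : 0 < g 0 := hpos 0 le_rfl
    have hlog : Real.log (g S) ≤ S + (k:ℝ) * L + Real.log (g 0) := by
      have h1 : Real.log (g S) ≤ Real.log (Real.exp S * (1-ε)^k * g 0) :=
        Real.log_le_log hgS hg
      rw [Real.log_mul (by positivity) (ne_of_gt hg0), Real.log_mul (Real.exp_ne_zero S) (by positivity),
        Real.log_exp, Real.log_pow] at h1
      linarith
    have hkL : (k:ℝ) * L ≤ (x - 1) * L := mul_le_mul_of_nonpos_right hxk hL.le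
    have hCd : C ≤ d * S := by
      rw [div_le_iff₀ hd] at hS4
      linarith [mul_comm d S]
    rw [div_le_iff₀ hS0]
    have hT' : T ≠ 0 := ne_of_gt hT
    have hxL : x * L = (δ/(8*T)) * L * S := by rw [hxdef]; ring
    have h16 : (δ/(8*T)) * L * S = 2*((δ/(16*T)) * L * S) := by field_simp; ring
    have hdS : d * S = -((δ/(16*T)) * L * S) := by rw [hddef]; ring
    have hcS : c * S = S + (δ/(16*T)) * L * S := by rw [hcdef]; ring
    have hx1L : (x - 1) * L = x * L - L := by ring
    have hC : C = Real.log (g 0) - L := hCdef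
    have e1 : Real.log (g S) ≤ S + (x - 1) * L + Real.log (g 0) := by linarith
    have e2 : Real.log (g S) ≤ S + 2 * (δ/(16*T) * L * S) - L + Real.log (g 0) := by
      rw [hx1L, hxL, h16] at e1; linarith
    have e3 : Real.log (g 0) - L ≤ -(δ/(16*T) * L * S) := by
      rw [← hC, ← hdS]; exact hCd
    rw [hcS]
    linarith [e2, e3]
  by_cases hcb : IsCoboundedUnder (· ≤ ·) atTop (fun t : ℝ => Real.log (g t) / t)
  · exact lt_of_le_of_lt (limsup_le_of_le hcb hev) hc1
  · have hnb : ¬BddBelow {a : ℝ | ∀ᶠ n in atTop, Real.log (g n) / n ≤ a} := by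
      rintro ⟨b, hb⟩
      exact hcb ⟨b, fun a ha => hb (eventually_map.1 ha)⟩
    rw [limsup_eq, Real.sInf_of_not_bddBelow hnb]
    norm_num
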